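/- Let b > 0, θ ∈ ℝ^K, k* = argmax_k |θ_k| with θ_{k*} ≠ 0, and assume ‖θ̂_t − θ‖_∞ ≤ b/√t for all t. If the stopping time T satisfies both criteria (i) max_k |θ̂_{k,T}| − 2b/√T > 0 and (ii) T ≥ √n/(max_k |θ̂_{k,T}| − b/√T), then T ≥ max(b²/θ_{k*}², √n/|θ_{k*}|), and in particular T ≥ b²√n/‖θ‖₂ when additionally max(b²/θ_{k*}², √n/|θ_{k*}|) ≥ b²√n/‖θ‖₂ holds via |θ_{k*}| ≤ ‖θ‖₂. -/
import Mathlib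


/-- If the stopping time `T` satisfies both criteria
(i) `max_k |θ̂_{k,T}| − 2b/√T > 0` and (ii) `T ≥ √n/(max_k |θ̂_{k,T}| − b/√T)`,
under the concentration `‖θ̂_t − θ‖_∞ ≤ b/√t`, then
`T ≥ max(b²/θ_{k*}², √n/|θ_{k*}|)`; and in particular `T ≥ b²√n/‖θ‖₂` whenever
additionally `max(b²/θ_{k*}², √n/|θ_{k*}|) ≥ b²√n/‖θ‖₂`. -/
theorem stmt12 {K n : ℕ} (hKne : (Finset.univ : Finset (Fin K)).Nonempty)
    (θ : EuclideanSpace ℝ (Fin K)) (θhat : ℕ → Fin K → ℝ) {b : ℝ} (hb : 0 < b)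
    (kstar : Fin K) (hkstar : ∀ k, |θ k| ≤ |θ kstar|) (hθ : θ kstar ≠ 0)
    (T : ℕ) (hT1 : 1 ≤ T)
    (hconc : ∀ t : ℕ, 1 ≤ t → ∀ k, |θhat t k - θ k| ≤ b / Real.sqrt t)
    (hcrit1 : 0 < Finset.univ.sup' hKne (fun k => |θhat T k|) - 2 * b / Real.sqrt T)
    (hcrit2 : Real.sqrt n / (Finset.univ.sup' hKne (fun k => |θhat T k|) - b / Real.sqrt T)
      ≤ (T : ℝ)) :
    max (b ^ 2 / θ kstar ^ 2) (Real.sqrt n / |θ kstar|) ≤ (T : ℝ) ∧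
    (b ^ 2 * Real.sqrt n / ‖θ‖ ≤ max (b ^ 2 / θ kstar ^ 2) (Real.sqrt n / |θ kstar|) →
      b ^ 2 * Real.sqrt n / ‖θ‖ ≤ (T : ℝ)) := by
  set M := Finset.univ.sup' hKne (fun k => |θhat T k|) with hM
  have hTpos : (0 : ℝ) < (T : ℝ) := by exact_mod_cast hT1
  have hs : 0 < Real.sqrt T := Real.sqrt_pos.mpr hTpos
  have hsq : Real.sqrt T ^ 2 = (T : ℝ) := Real.sq_sqrt hTpos.le
  -- M ≤ |θ kstar| + b/√T
  have hMle : M ≤ |θ kstar| + b / Real.sqrt T := by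
    apply Finset.sup'_le
    intro k _
    have h1 := hconc T hT1 k
    have : |θhat T k| ≤ |θ k| + b / Real.sqrt T := by
      have := abs_sub_abs_le_abs_sub (θhat T k) (θ k)
      linarith
    linarith [hkstar k]
  have hkey : b / Real.sqrt T < |θ kstar| := by
    have h1 : 2 * b / Real.sqrt T < M := by linarith
    have h2 : 2 * b / Real.sqrt T = b / Real.sqrt T + b / Real.sqrt T := by ring
    linarith
  have hθpos : 0 < |θ kstar| := lt_trans (by positivity) hkey
  have h1 : b ^ 2 / θ kstar ^ 2 ≤ (T : ℝ) := by
    rw [div_le_iff₀ (by positivity)]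
    have : b < |θ kstar| * Real.sqrt T := by
      rw [div_lt_iff₀ hs] at hkey
      linarith
    have h2 : b ^ 2 ≤ (|θ kstar| * Real.sqrt T) ^ 2 := by nlinarith
    calc b ^ 2 ≤ (|θ kstar| * Real.sqrt T) ^ 2 := h2
      _ = (T : ℝ) * θ kstar ^ 2 := by rw [mul_pow, sq_abs, hsq]; ring
  have hMb : 0 < M - b / Real.sqrt T := by
    have : b / Real.sqrt T < 2 * b / Real.sqrt T := by
      rw [div_lt_div_iff₀ hs hs]; nlinarith
    linarith
  have h2 : Real.sqrt n / |θ kstar| ≤ (T : ℝ) := by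
    refine le_trans ?_ hcrit2
    apply div_le_div_of_nonneg_left (Real.sqrt_nonneg _) hMb
    linarith
  refine ⟨max_le h1 h2, fun h => le_trans h (max_le h1 h2)⟩
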